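/- Let R = ℂ[h,e]/⟨h² + (1/4)e² − he, h²e⟩ and S = ℂ[H,E]/⟨H² − E², H²E⟩. The ℂ-algebra map sending H ↦ h and E ↦ (i/2)·e induces a well-defined ring isomorphism S ≅ R, where i is the imaginary unit. -/
import Mathlib

open MvPolynomial

/-- The ideal presenting the Chen-Ruan cohomology ring `S = ℂ[H,E]/⟨H²−E², H²E⟩`
of `P(1,1,2,2)`.  Variables: `X 0 = H`, `X 1 = E`. -/
noncomputable def idealS : Ideal (MvPolynomial (Fin 2) ℂ) :=
  Ideal.span {X 0 ^ 2 - X 1 ^ 2, X 0 ^ 2 * X 1}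

/-- The ideal presenting the quantum corrected cohomology ring
`R = ℂ[h,e]/⟨h²e, h² + (1/4)e²⟩` of the crepant resolution of `|P(1,1,2,2)|`
at `q₁ = −1`.  Variables: `X 0 = h`, `X 1 = e`. -/
noncomputable def idealR : Ideal (MvPolynomial (Fin 2) ℂ) :=
  Ideal.span {X 0 ^ 2 * X 1, X 0 ^ 2 + C (1 / 4 : ℂ) * X 1 ^ 2}

noncomputable def vSR : Fin 2 → MvPolynomial (Fin 2) ℂ := ![X 0, C (Complex.I / 2) * X 1]
noncomputable def vRS : Fin 2 → MvPolynomial (Fin 2) ℂ := ![X 0, C (-2 * Complex.I) * X 1]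

lemma vSR0 : vSR 0 = X 0 := rfl
lemma vSR1 : vSR 1 = C (Complex.I / 2) * X 1 := rfl
lemma vRS0 : vRS 0 = X 0 := rfl
lemma vRS1 : vRS 1 = C (-2 * Complex.I) * X 1 := rfl

noncomputable def fSR : MvPolynomial (Fin 2) ℂ →ₐ[ℂ] MvPolynomial (Fin 2) ℂ ⧸ idealR :=
  (Ideal.Quotient.mkₐ ℂ idealR).comp (aeval vSR)

noncomputable def fRS : MvPolynomial (Fin 2) ℂ →ₐ[ℂ] MvPolynomial (Fin 2) ℂ ⧸ idealS :=
  (Ideal.Quotient.mkₐ ℂ idealS).comp (aeval vRS)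

lemma fSR_apply (p : MvPolynomial (Fin 2) ℂ) :
    fSR p = Ideal.Quotient.mk idealR (aeval vSR p) := rfl

lemma fRS_apply (p : MvPolynomial (Fin 2) ℂ) :
    fRS p = Ideal.Quotient.mk idealS (aeval vRS p) := rfl

lemma aeval_Sgen1 : aeval vSR (X 0 ^ 2 - X 1 ^ 2 : MvPolynomial (Fin 2) ℂ)
    = X 0 ^ 2 + C (1 / 4 : ℂ) * X 1 ^ 2 := by
  simp only [map_sub, map_pow, aeval_X]
  rw [vSR0, vSR1, mul_pow, ← C_pow,
    show (Complex.I / 2) ^ 2 = -(1 / 4 : ℂ) by linear_combination (1/4 : ℂ) * Complex.I_sq,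
    map_neg]
  ring

lemma aeval_Sgen2 : aeval vSR (X 0 ^ 2 * X 1 : MvPolynomial (Fin 2) ℂ)
    = C (Complex.I / 2) * (X 0 ^ 2 * X 1) := by
  rw [map_mul, map_pow, aeval_X, aeval_X, vSR0, vSR1]; ring

lemma aeval_Rgen1 : aeval vRS (X 0 ^ 2 * X 1 : MvPolynomial (Fin 2) ℂ)
    = C (-2 * Complex.I) * (X 0 ^ 2 * X 1) := by
  rw [map_mul, map_pow, aeval_X, aeval_X, vRS0, vRS1]; ring

lemma aeval_Rgen2 : aeval vRS (X 0 ^ 2 + C (1 / 4 : ℂ) * X 1 ^ 2 : MvPolynomial (Fin 2) ℂ)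
    = X 0 ^ 2 - X 1 ^ 2 := by
  rw [map_add, map_mul, map_pow, map_pow, aeval_C, MvPolynomial.algebraMap_eq, aeval_X, aeval_X, vRS0, vRS1, mul_pow,
    ← C_pow, ← mul_assoc, ← C_mul,
    show (1 / 4 : ℂ) * (-2 * Complex.I) ^ 2 = -1 by linear_combination Complex.I_sq,
    map_neg, map_one]
  ring

lemma fSR_ker : idealS ≤ RingHom.ker fSR := by
  rw [idealS, Ideal.span_le]
  rintro p (rfl | rfl) <;>
    rw [SetLike.mem_coe, RingHom.mem_ker, fSR_apply, Ideal.Quotient.eq_zero_iff_mem]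
  · rw [aeval_Sgen1]
    exact Ideal.subset_span (by simp [idealR])
  · rw [aeval_Sgen2]
    exact Ideal.mul_mem_left _ _ (Ideal.subset_span (by simp [idealR]))

lemma fRS_ker : idealR ≤ RingHom.ker fRS := by
  rw [idealR, Ideal.span_le]
  rintro p (rfl | rfl) <;>
    rw [SetLike.mem_coe, RingHom.mem_ker, fRS_apply, Ideal.Quotient.eq_zero_iff_mem]
  · rw [aeval_Rgen1]
    exact Ideal.mul_mem_left _ _ (Ideal.subset_span (by simp [idealS]))
  · rw [aeval_Rgen2]
    exact Ideal.subset_span (by simp [idealS])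

theorem crepant_resolution_P1122 :
    ∃ φ : (MvPolynomial (Fin 2) ℂ ⧸ idealS) ≃ₐ[ℂ] (MvPolynomial (Fin 2) ℂ ⧸ idealR),
      φ (Ideal.Quotient.mk idealS (X 0)) = Ideal.Quotient.mk idealR (X 0) ∧
      φ (Ideal.Quotient.mk idealS (X 1)) =
        (Complex.I / 2) • Ideal.Quotient.mk idealR (X 1) := by
  let F := Ideal.Quotient.liftₐ idealS fSR (fun a ha => fSR_ker ha)
  let G := Ideal.Quotient.liftₐ idealR fRS (fun a ha => fRS_ker ha)
  have hF : ∀ p, F (Ideal.Quotient.mk idealS p) = Ideal.Quotient.mk idealR (aeval vSR p) :=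
    fun p => rfl
  have hG : ∀ p, G (Ideal.Quotient.mk idealR p) = Ideal.Quotient.mk idealS (aeval vRS p) :=
    fun p => rfl
  have hGF : G.comp F = AlgHom.id ℂ _ := by
    apply Ideal.Quotient.algHom_ext
    apply MvPolynomial.algHom_ext
    intro i
    simp only [AlgHom.comp_apply, Ideal.Quotient.mkₐ_eq_mk, AlgHom.coe_id, id_eq]
    rw [hF, hG]
    congr 1
    fin_cases i
    · rw [show (X (⟨0, by norm_num⟩ : Fin 2) : MvPolynomial (Fin 2) ℂ) = X 0 from rfl,
        aeval_X, vSR0, aeval_X, vRS0]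
    · rw [show (X (⟨1, by norm_num⟩ : Fin 2) : MvPolynomial (Fin 2) ℂ) = X 1 from rfl,
        aeval_X, vSR1, map_mul, aeval_C, MvPolynomial.algebraMap_eq, aeval_X, vRS1, ← mul_assoc, ← C_mul,
        show (Complex.I / 2) * (-2 * Complex.I) = 1 by linear_combination -Complex.I_sq,
        map_one, one_mul]
  have hFG : F.comp G = AlgHom.id ℂ _ := by
    apply Ideal.Quotient.algHom_ext
    apply MvPolynomial.algHom_ext
    intro i
    simp only [AlgHom.comp_apply, Ideal.Quotient.mkₐ_eq_mk, AlgHom.coe_id, id_eq]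
    rw [hG, hF]
    congr 1
    fin_cases i
    · rw [show (X (⟨0, by norm_num⟩ : Fin 2) : MvPolynomial (Fin 2) ℂ) = X 0 from rfl,
        aeval_X, vRS0, aeval_X, vSR0]
    · rw [show (X (⟨1, by norm_num⟩ : Fin 2) : MvPolynomial (Fin 2) ℂ) = X 1 from rfl,
        aeval_X, vRS1, map_mul, aeval_C, MvPolynomial.algebraMap_eq, aeval_X, vSR1, ← mul_assoc, ← C_mul,
        show (-2 * Complex.I) * (Complex.I / 2) = 1 by linear_combination -Complex.I_sq,
        map_one, one_mul]
  refine ⟨AlgEquiv.ofAlgHom F G hFG hGF, ?_, ?_⟩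
  · change F (Ideal.Quotient.mk idealS (X 0)) = _
    rw [hF, aeval_X, vSR0]
  · change F (Ideal.Quotient.mk idealS (X 1)) = _
    rw [hF, aeval_X, vSR1, ← MvPolynomial.smul_eq_C_mul, ← Ideal.Quotient.mkₐ_eq_mk ℂ,
      map_smul, Ideal.Quotient.mkₐ_eq_mk]
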